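/- For every integer n ≥ 4, ∑_{k=3}^{n} (-1)^{k-1} · {n k} · (k-1)! · ((H_{k-1})^2 - H_{k-1}^{(2)}) · H_k = ((n^2 + 2)/3) · B_{n-3}. -/
import Mathlib


/-- Stirling numbers of the second kind. -/
def stirling2 : ℕ → ℕ → ℕ
  | 0, 0 => 1
  | 0, _ + 1 => 0
  | _ + 1, 0 => 0
  | n + 1, k + 1 => (k + 1) * stirling2 n (k + 1) + stirling2 n k

/-- The generalized harmonic number of order 2. -/
def harmonic2 (n : ℕ) : ℚ := ∑ i ∈ Finset.range n, (1 : ℚ) / ((i : ℚ) + 1) ^ 2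

section Aux
open Finset Polynomial

lemma harmonic2_succ (n : ℕ) : harmonic2 (n+1) = harmonic2 n + 1/((n:ℚ)+1)^2 := by
  simp [harmonic2, Finset.sum_range_succ]

lemma stirling2_succ_succ (n k : ℕ) :
    stirling2 (n+1) (k+1) = (k+1) * stirling2 n (k+1) + stirling2 n k := rfl

lemma stirling2_eq_zero : ∀ {n k : ℕ}, n < k → stirling2 n k = 0 := by
  intro n
  induction n with
  | zero => intro k h; match k, h with | k+1, _ => rfl
  | succ n ih =>
    intro k h
    match k, h with
    | k+1, h =>
      rw [stirling2_succ_succ, ih (by omega), ih (by omega)]; ring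

noncomputable def S1 (j m : ℕ) : ℚ := (descPochhammer ℚ j).coeff m

lemma S1_succ (k m : ℕ) : S1 (k+1) (m+1) = S1 k m - k * S1 k (m+1) := by
  unfold S1
  rw [descPochhammer_succ_right, ← C_eq_natCast, mul_sub, coeff_sub, coeff_mul_X, coeff_mul_C]
  ring

lemma S1_zero (k : ℕ) : S1 k 0 = if k = 0 then 1 else 0 := by
  unfold S1; rw [Polynomial.coeff_zero_eq_eval_zero, descPochhammer_eval_zero]

lemma S1_one (k : ℕ) : S1 (k+1) 1 = (-1)^k * k.factorial := by
  induction k with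
  | zero => simp [S1, Polynomial.coeff_X]
  | succ k ih =>
    rw [S1_succ, ih, S1_zero, Nat.factorial_succ]
    push_cast
    ring

lemma S1_two (k : ℕ) : S1 (k+1) 2 = (-1)^(k+1) * k.factorial * harmonic k := by
  induction k with
  | zero => simp [S1, Polynomial.coeff_X]
  | succ k ih =>
    have h : ((k:ℚ)+1) ≠ 0 := by positivity
    rw [S1_succ, ih, S1_one, harmonic_succ, Nat.factorial_succ]
    push_cast
    field_simp
    ring

lemma S1_three (k : ℕ) :
    S1 (k+1) 3 = (-1)^k * k.factorial * ((harmonic k)^2 - harmonic2 k) / 2 := by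
  induction k with
  | zero => simp [S1, harmonic2, Polynomial.coeff_X]
  | succ k ih =>
    have h : ((k:ℚ)+1) ≠ 0 := by positivity
    rw [S1_succ, ih, S1_two, harmonic_succ, harmonic2_succ, Nat.factorial_succ]
    push_cast
    field_simp
    ring

lemma stirling_desc (n : ℕ) :
    ∑ k ∈ range (n+1), C (stirling2 n k : ℚ) * descPochhammer ℚ k = X ^ n := by
  induction n with
  | zero => simp [stirling2]
  | succ n ih =>
    have key : ∀ k : ℕ, X * descPochhammer ℚ k
        = descPochhammer ℚ (k+1) + C (k:ℚ) * descPochhammer ℚ k := by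
      intro k
      rw [descPochhammer_succ_right, ← C_eq_natCast]
      ring
    have hzero : C (stirling2 (n+1) 0 : ℚ) * descPochhammer ℚ 0 = 0 := by
      simp [stirling2]
    calc ∑ k ∈ range (n+2), C (stirling2 (n+1) k : ℚ) * descPochhammer ℚ k
        = ∑ j ∈ range (n+1), C (stirling2 (n+1) (j+1) : ℚ) * descPochhammer ℚ (j+1)
          + C (stirling2 (n+1) 0 : ℚ) * descPochhammer ℚ 0 :=
          Finset.sum_range_succ' _ _
      _ = ∑ j ∈ range (n+1), (C ((j:ℚ)+1) * C (stirling2 n (j+1) : ℚ) * descPochhammer ℚ (j+1)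
          + C (stirling2 n j : ℚ) * descPochhammer ℚ (j+1)) := by
          rw [hzero, add_zero]
          refine Finset.sum_congr rfl fun j _ => ?_
          rw [stirling2_succ_succ]
          push_cast
          rw [Polynomial.C_add, Polynomial.C_mul]
          ring
      _ = ∑ j ∈ range (n+1), C ((j:ℚ)+1) * C (stirling2 n (j+1) : ℚ) * descPochhammer ℚ (j+1)
          + ∑ j ∈ range (n+1), C (stirling2 n j : ℚ) * descPochhammer ℚ (j+1) :=
          Finset.sum_add_distrib
      _ = ∑ k ∈ range (n+1), C (k:ℚ) * C (stirling2 n k : ℚ) * descPochhammer ℚ k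
          + ∑ j ∈ range (n+1), C (stirling2 n j : ℚ) * descPochhammer ℚ (j+1) := by
          congr 1
          have h1 : ∑ k ∈ range (n+2), C (k:ℚ) * C (stirling2 n k : ℚ) * descPochhammer ℚ k
              = ∑ j ∈ range (n+1), C ((j:ℚ)+1) * C (stirling2 n (j+1) : ℚ)
                  * descPochhammer ℚ (j+1) := by
            rw [Finset.sum_range_succ' (fun k => C (k:ℚ) * C (stirling2 n k : ℚ)
              * descPochhammer ℚ k) (n+1)]
            push_cast
            simp
          have h2 : ∑ k ∈ range (n+2), C (k:ℚ) * C (stirling2 n k : ℚ) * descPochhammer ℚ k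
              = ∑ k ∈ range (n+1), C (k:ℚ) * C (stirling2 n k : ℚ) * descPochhammer ℚ k := by
            rw [Finset.sum_range_succ, stirling2_eq_zero (Nat.lt_succ_self n)]
            simp
          rw [← h1, h2]
      _ = ∑ k ∈ range (n+1), C (stirling2 n k : ℚ) * (X * descPochhammer ℚ k) := by
          rw [← Finset.sum_add_distrib]
          refine Finset.sum_congr rfl fun k _ => ?_
          rw [key k]
          ring
      _ = X ^ (n+1) := by
          have : ∑ k ∈ range (n+1), C (stirling2 n k : ℚ) * (X * descPochhammer ℚ k)
              = X * ∑ k ∈ range (n+1), C (stirling2 n k : ℚ) * descPochhammer ℚ k := by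
            rw [Finset.mul_sum]
            exact Finset.sum_congr rfl fun k _ => by ring
          rw [this, ih, pow_succ]
          ring

lemma eval_stirling_desc (n : ℕ) (x : ℚ) :
    ∑ k ∈ range (n+1), (stirling2 n k : ℚ) * (descPochhammer ℚ k).eval x = x ^ n := by
  have h := congrArg (Polynomial.eval x) (stirling_desc n)
  rw [Polynomial.eval_finset_sum] at h
  simpa using h

lemma desc_eval_succ (k : ℕ) (x : ℚ) :
    (descPochhammer ℚ (k+1)).eval (x+1)
      = ((k:ℚ)+1) * (descPochhammer ℚ k).eval x + (descPochhammer ℚ (k+1)).eval x := by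
  have h1 : (descPochhammer ℚ (k+1)).eval (x+1) = (x+1) * (descPochhammer ℚ k).eval x := by
    rw [descPochhammer_succ_left]
    simp [Polynomial.eval_comp]
  rw [h1, descPochhammer_succ_eval]
  ring

lemma Qp_eval (n N : ℕ) :
    ∑ k ∈ range (n+1),
        (stirling2 n k : ℚ) / ((k:ℚ)+1) * (descPochhammer ℚ (k+1)).eval (N:ℚ)
      = ∑ x ∈ range N, (x:ℚ)^n := by
  induction N with
  | zero => simp
  | succ N ih =>
    rw [Finset.sum_range_succ (fun x => (x:ℚ)^n) N, ← ih]
    have hcast : ((N+1 : ℕ) : ℚ) = (N:ℚ)+1 := by push_cast; ring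
    rw [hcast]
    have : ∀ k ∈ range (n+1),
        (stirling2 n k : ℚ) / ((k:ℚ)+1) * (descPochhammer ℚ (k+1)).eval ((N:ℚ)+1)
        = (stirling2 n k : ℚ) / ((k:ℚ)+1) * (descPochhammer ℚ (k+1)).eval (N:ℚ)
          + (stirling2 n k : ℚ) * (descPochhammer ℚ k).eval (N:ℚ) := by
      intro k _
      have hk : ((k:ℚ)+1) ≠ 0 := by positivity
      rw [desc_eval_succ]
      field_simp
      ring
    rw [Finset.sum_congr rfl this, Finset.sum_add_distrib, eval_stirling_desc]

noncomputable def Qp (n : ℕ) : Polynomial ℚ :=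
  ∑ k ∈ range (n+1), C ((stirling2 n k : ℚ) / ((k:ℚ)+1)) * descPochhammer ℚ (k+1)

noncomputable def Rp (n : ℕ) : Polynomial ℚ :=
  ∑ i ∈ range (n+1), C (_root_.bernoulli i * ((n+1).choose i : ℚ) / ((n:ℚ)+1)) * X ^ (n+1-i)

lemma Qp_eq_Rp (n : ℕ) : Qp n = Rp n := by
  apply Polynomial.eq_of_infinite_eval_eq
  apply Set.Infinite.mono (s := Set.range (Nat.cast : ℕ → ℚ))
  · rintro _ ⟨N, rfl⟩
    show (Qp n).eval (N:ℚ) = (Rp n).eval (N:ℚ)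
    have hq : (Qp n).eval (N:ℚ) = ∑ x ∈ range N, (x:ℚ)^n := by
      rw [Qp, Polynomial.eval_finset_sum, ← Qp_eval n N]
      exact Finset.sum_congr rfl fun k _ => by simp
    have hr : (Rp n).eval (N:ℚ) = ∑ x ∈ range N, (x:ℚ)^n := by
      rw [Rp, Polynomial.eval_finset_sum, sum_range_pow]
      refine Finset.sum_congr rfl fun i _ => ?_
      simp only [Polynomial.eval_mul, Polynomial.eval_C, Polynomial.eval_pow, Polynomial.eval_X]
      ring
    rw [hq, hr]
  · exact Set.infinite_range_of_injective Nat.cast_injective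

lemma master (n m : ℕ) (h1 : 1 ≤ m) (h2 : m ≤ n + 1) :
    ∑ k ∈ range (n+1), (stirling2 n k : ℚ) / ((k:ℚ)+1) * S1 (k+1) m
      = _root_.bernoulli (n+1-m) * ((n+1).choose m : ℚ) / ((n:ℚ)+1) := by
  have h := congrArg (fun p => Polynomial.coeff p m) (Qp_eq_Rp n)
  simp only [Qp, Rp, Polynomial.finset_sum_coeff, Polynomial.coeff_C_mul,
    Polynomial.coeff_X_pow] at h
  have hL : ∑ k ∈ range (n+1),
      (stirling2 n k : ℚ) / ((k:ℚ)+1) * (descPochhammer ℚ (k+1)).coeff m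
      = ∑ k ∈ range (n+1), (stirling2 n k : ℚ) / ((k:ℚ)+1) * S1 (k+1) m :=
    Finset.sum_congr rfl fun k _ => rfl
  rw [hL] at h
  rw [h]
  rw [Finset.sum_eq_single (n+1-m)]
  · have hmm : m = n+1-(n+1-m) := by omega
    rw [if_pos hmm, Nat.choose_symm h2]
    ring
  · intro i hi hne
    have : ¬ (m = n+1-i) := by
      simp only [Finset.mem_range] at hi
      omega
    rw [if_neg this, mul_zero]
  · intro hmem
    exfalso
    apply hmem
    simp only [Finset.mem_range]
    omega

lemma step (n : ℕ) (v : ℕ → ℚ) :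
    ∑ k ∈ range (n+2), (stirling2 (n+1) k : ℚ) * v k
      = ∑ k ∈ range (n+1), (stirling2 n k : ℚ) * ((k:ℚ) * v k + v (k+1)) := by
  rw [Finset.sum_range_succ' (fun k => (stirling2 (n+1) k : ℚ) * v k) (n+1)]
  have h0 : (stirling2 (n+1) 0 : ℚ) * v 0 = 0 := by simp [stirling2]
  rw [h0, add_zero]
  have hsplit : ∀ j ∈ range (n+1), (stirling2 (n+1) (j+1) : ℚ) * v (j+1)
      = ((j:ℚ)+1) * (stirling2 n (j+1) : ℚ) * v (j+1) + (stirling2 n j : ℚ) * v (j+1) := by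
    intro j _
    rw [stirling2_succ_succ]
    push_cast
    ring
  rw [Finset.sum_congr rfl hsplit, Finset.sum_add_distrib]
  have hA : ∑ j ∈ range (n+1), ((j:ℚ)+1) * (stirling2 n (j+1) : ℚ) * v (j+1)
      = ∑ k ∈ range (n+1), (stirling2 n k : ℚ) * ((k:ℚ) * v k) := by
    have e1 : ∑ k ∈ range (n+2), (k:ℚ) * (stirling2 n k : ℚ) * v k
        = ∑ j ∈ range (n+1), ((j:ℚ)+1) * (stirling2 n (j+1) : ℚ) * v (j+1) := by
      rw [Finset.sum_range_succ' (fun k => (k:ℚ) * (stirling2 n k : ℚ) * v k) (n+1)]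
      push_cast
      simp
    have e2 : ∑ k ∈ range (n+2), (k:ℚ) * (stirling2 n k : ℚ) * v k
        = ∑ k ∈ range (n+1), (k:ℚ) * (stirling2 n k : ℚ) * v k := by
      rw [Finset.sum_range_succ, stirling2_eq_zero (Nat.lt_succ_self n)]
      simp
    rw [← e1, e2]
    exact Finset.sum_congr rfl fun k _ => by ring
  rw [hA, ← Finset.sum_add_distrib]
  exact Finset.sum_congr rfl fun k _ => by ring

lemma chainV (n : ℕ) :
    ∑ k ∈ range (n+2), (stirling2 (n+1) k : ℚ) * (2 * S1 k 1 * harmonic k)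
      = 2 * _root_.bernoulli n := by
  rw [step n (fun k => 2 * S1 k 1 * harmonic k)]
  have hpt : ∀ k ∈ range (n+1),
      (stirling2 n k : ℚ) * ((k:ℚ) * (2 * S1 k 1 * harmonic k) + 2 * S1 (k+1) 1 * harmonic (k+1))
      = 2 * ((stirling2 n k : ℚ) / ((k:ℚ)+1) * S1 (k+1) 1)
        + (stirling2 n k : ℚ) * (2 * S1 k 0 * harmonic k) := by
    intro k _
    have hk : ((k:ℚ)+1) ≠ 0 := by positivity
    have hs : S1 (k+1) 1 = S1 k 0 - (k:ℚ) * S1 k 1 := S1_succ k 0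
    have hh : harmonic (k+1) = harmonic k + 1/((k:ℚ)+1) := by
      rw [harmonic_succ]; push_cast; ring
    rw [hh, hs]
    field_simp
    ring
  rw [Finset.sum_congr rfl hpt, Finset.sum_add_distrib, ← Finset.mul_sum,
    master n 1 (by omega) (by omega)]
  have hz : ∀ k ∈ range (n+1), (stirling2 n k : ℚ) * (2 * S1 k 0 * harmonic k) = 0 := by
    intro k _
    rcases Nat.eq_zero_or_pos k with hk | hk
    · subst hk; simp
    · have : S1 k 0 = 0 := by
        rw [S1_zero, if_neg (by omega)]
      rw [this]; ring
  rw [Finset.sum_eq_zero hz, add_zero, Nat.add_sub_cancel, Nat.choose_one_right]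
  have hn : ((n:ℚ)+1) ≠ 0 := by positivity
  push_cast
  field_simp

lemma chainU (n : ℕ) (hn : 1 ≤ n) :
    ∑ k ∈ range (n+2), (stirling2 (n+1) k : ℚ) * (2 * S1 k 2 * harmonic k)
      = ∑ k ∈ range (n+1), (stirling2 n k : ℚ) * (2 * S1 k 1 * harmonic k)
        + 2 * (_root_.bernoulli (n+1-2) * ((n+1).choose 2 : ℚ) / ((n:ℚ)+1)) := by
  rw [step n (fun k => 2 * S1 k 2 * harmonic k)]
  have hpt : ∀ k ∈ range (n+1),
      (stirling2 n k : ℚ) * ((k:ℚ) * (2 * S1 k 2 * harmonic k) + 2 * S1 (k+1) 2 * harmonic (k+1))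
      = (stirling2 n k : ℚ) * (2 * S1 k 1 * harmonic k)
        + 2 * ((stirling2 n k : ℚ) / ((k:ℚ)+1) * S1 (k+1) 2) := by
    intro k _
    have hk : ((k:ℚ)+1) ≠ 0 := by positivity
    have hs : S1 (k+1) 2 = S1 k 1 - (k:ℚ) * S1 k 2 := S1_succ k 1
    have hh : harmonic (k+1) = harmonic k + 1/((k:ℚ)+1) := by
      rw [harmonic_succ]; push_cast; ring
    rw [hh, hs]
    field_simp
    ring
  rw [Finset.sum_congr rfl hpt, Finset.sum_add_distrib, ← Finset.mul_sum,
    master n 2 (by omega) (by omega)]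

lemma chainT (n : ℕ) (hn : 2 ≤ n) :
    ∑ k ∈ range (n+2), (stirling2 (n+1) k : ℚ) * (2 * S1 k 3 * harmonic k)
      = ∑ k ∈ range (n+1), (stirling2 n k : ℚ) * (2 * S1 k 2 * harmonic k)
        + 2 * (_root_.bernoulli (n+1-3) * ((n+1).choose 3 : ℚ) / ((n:ℚ)+1)) := by
  rw [step n (fun k => 2 * S1 k 3 * harmonic k)]
  have hpt : ∀ k ∈ range (n+1),
      (stirling2 n k : ℚ) * ((k:ℚ) * (2 * S1 k 3 * harmonic k) + 2 * S1 (k+1) 3 * harmonic (k+1))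
      = (stirling2 n k : ℚ) * (2 * S1 k 2 * harmonic k)
        + 2 * ((stirling2 n k : ℚ) / ((k:ℚ)+1) * S1 (k+1) 3) := by
    intro k _
    have hk : ((k:ℚ)+1) ≠ 0 := by positivity
    have hs : S1 (k+1) 3 = S1 k 2 - (k:ℚ) * S1 k 3 := S1_succ k 2
    have hh : harmonic (k+1) = harmonic k + 1/((k:ℚ)+1) := by
      rw [harmonic_succ]; push_cast; ring
    rw [hh, hs]
    field_simp
    ring
  rw [Finset.sum_congr rfl hpt, Finset.sum_add_distrib, ← Finset.mul_sum,
    master n 3 (by omega) (by omega)]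

lemma c2cast (t : ℕ) : (((t+3).choose 2 : ℕ) : ℚ) = ((t:ℚ)+3)*((t:ℚ)+2)/2 := by
  induction t with
  | zero => norm_num [Nat.choose]
  | succ t ih =>
    have : (t+1)+3 = (t+3)+1 := by omega
    rw [this, Nat.choose_succ_succ (t+3) 1, Nat.choose_one_right]
    push_cast
    rw [ih]
    ring

lemma c3cast (t : ℕ) : (((t+4).choose 3 : ℕ) : ℚ) = ((t:ℚ)+4)*((t:ℚ)+3)*((t:ℚ)+2)/6 := by
  induction t with
  | zero => norm_num [Nat.choose]
  | succ t ih =>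
    have : (t+1)+4 = (t+4)+1 := by omega
    rw [this, Nat.choose_succ_succ (t+4) 2]
    push_cast
    rw [ih, show (t:ℕ)+4 = (t+1)+3 from by omega, c2cast (t+1)]
    push_cast
    ring

lemma S1_three_zero {k : ℕ} (hk : k < 3) : S1 k 3 = 0 := by
  unfold S1
  apply Polynomial.coeff_eq_zero_of_natDegree_lt
  rw [descPochhammer_natDegree]
  omega


end Aux

theorem stirling_harmonic_bernoulli (n : ℕ) (hn : 4 ≤ n) :
    ∑ k ∈ Finset.Icc 3 n,
      (-1 : ℚ) ^ (k - 1) * (stirling2 n k : ℚ) * ((k - 1).factorial : ℚ) *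
        ((harmonic (k - 1)) ^ 2 - harmonic2 (k - 1)) * harmonic k
      = (((n : ℚ) ^ 2 + 2) / 3) * bernoulli (n - 3) := by
  obtain ⟨t, rfl⟩ := Nat.exists_eq_add_of_le hn
  rw [show 4 + t = t + 4 from by omega]
  have hconv : ∑ k ∈ Finset.Icc 3 (t+4),
      (-1 : ℚ) ^ (k - 1) * (stirling2 (t+4) k : ℚ) * ((k - 1).factorial : ℚ) *
        ((harmonic (k - 1)) ^ 2 - harmonic2 (k - 1)) * harmonic k
      = ∑ k ∈ Finset.range (t+5), (stirling2 (t+4) k : ℚ) * (2 * S1 k 3 * harmonic k) := by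
    rw [← Finset.sum_subset (s₁ := Finset.Icc 3 (t+4)) (s₂ := Finset.range (t+5))
      (by intro k hk; simp only [Finset.mem_Icc] at hk; simp only [Finset.mem_range]; omega)
      (by
        intro k hk hnk
        simp only [Finset.mem_Icc] at hnk
        simp only [Finset.mem_range] at hk
        have : k < 3 := by omega
        rw [S1_three_zero this]
        ring)]
    refine Finset.sum_congr rfl fun k hk => ?_
    simp only [Finset.mem_Icc] at hk
    obtain ⟨j, rfl⟩ : ∃ j, k = j + 1 := ⟨k - 1, by omega⟩
    rw [Nat.add_sub_cancel, S1_three j]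
    ring
  rw [hconv]
  have e1 := chainT (t+3) (by omega)
  have e2 := chainU (t+2) (by omega)
  have e3 := chainV (t+1)
  simp only [show (t+3)+2 = t+5 from by omega, show (t+3)+1 = t+4 from by omega,
    show (t+3)+1-3 = t+1 from by omega] at e1
  simp only [show (t+2)+2 = t+4 from by omega, show (t+2)+1 = t+3 from by omega,
    show (t+2)+1-2 = t+1 from by omega] at e2
  simp only [show (t+1)+2 = t+3 from by omega, show (t+1)+1 = t+2 from by omega] at e3
  rw [e1, e2, e3]
  rw [show (t+4)-3 = t+1 from by omega]
  rw [show (t:ℕ)+4 = t+4 from rfl, c3cast t, show (t:ℕ)+3 = t+3 from rfl, c2cast t]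
  have h3 : ((t:ℚ)+3) ≠ 0 := by positivity
  have h4 : ((t:ℚ)+4) ≠ 0 := by positivity
  push_cast
  field_simp
  ring
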